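/- (Lemma 2: suboptimal estimation rate of the group lasso) Suppose β⁰_g ≠ 0 for every group g, λ_n/√n → ∞, and λ_n/n → 0. Then (n/λ_n)(β̂_n^GL − β⁰) converges in probability under μ_n to the constant vector C ∈ ℝ^p whose g-th block is −β⁰_g/‖β⁰_g‖₂: for every ε > 0, μ_n({x : ‖(n/λ_n)(β̂_n^GL(x) − β⁰) − C‖₂ > ε}) → 0 as n → ∞. In particular the group lasso converges at rate n/λ_n, which is slower than √n. -/

import Mathlib

open MeasureTheory ProbabilityTheory Filter Classical
open scoped ENNReal
open scoped NNReal

/-- **Lemma 2: suboptimal estimation rate of the group lasso.**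
Orthogonal design with Gaussian errors: the least squares estimator has law
`μ_n = ⊗_{i=1}^p N(β⁰_i, σ²/n)`; coordinates are partitioned into (nonempty)
groups by `gr : Fin p → Fin G`, and the group lasso estimator is
`β̂_{n,g}^GL = (1 - λ_n/(n‖β̂_{n,g}^LS‖₂))₊ β̂_{n,g}^LS` (zero when `β̂_{n,g}^LS = 0`).
If every true group coefficient block is nonzero, `λ_n/√n → ∞` and `λ_n/n → 0`,
then `(n/λ_n)(β̂_n^GL - β⁰)` converges in probability under `μ_n` to the vector `C`
whose `g`-th block is `-β⁰_g/‖β⁰_g‖₂`. -/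
private lemma std_tail_tendsto :
    Tendsto (fun M : ℕ => gaussianReal 0 1 {z : ℝ | (M : ℝ) ≤ |z|}) atTop (nhds 0) := by
  have h := tendsto_measure_iInter_atTop (μ := gaussianReal 0 1)
    (s := fun M : ℕ => {z : ℝ | (M : ℝ) ≤ |z|})
    (fun M => ((isClosed_le continuous_const continuous_abs).measurableSet).nullMeasurableSet)
    (fun a b hab z hz => le_trans (by exact_mod_cast hab : ((a:ℕ):ℝ) ≤ b) hz)
    ⟨0, measure_ne_top _ _⟩
  have hempty : (⋂ M : ℕ, {z : ℝ | (M : ℝ) ≤ |z|}) = ∅ := by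
    ext z
    simp only [Set.mem_iInter, Set.mem_setOf_eq, Set.mem_empty_iff_false, iff_false, not_forall,
      not_le]
    exact exists_nat_gt |z|
  rw [hempty, measure_empty] at h
  exact h

private lemma std_tail_tendsto' {c : ℕ → ℝ} (hc : Tendsto c atTop atTop) :
    Tendsto (fun n => gaussianReal 0 1 {z : ℝ | c n ≤ |z|}) atTop (nhds 0) := by
  have h1 : Tendsto (fun n => ⌊c n⌋₊) atTop atTop := tendsto_nat_floor_atTop.comp hc
  have h2 := std_tail_tendsto.comp h1
  refine tendsto_of_tendsto_of_tendsto_of_le_of_le tendsto_const_nhds h2 (fun n => zero_le)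
    (fun n => measure_mono ?_)
  intro z hz
  simp only [Set.mem_setOf_eq, Function.comp_apply] at *
  rcases le_or_gt (c n) 0 with h | h
  · rw [Nat.floor_of_nonpos h]; simpa using abs_nonneg z
  · exact le_trans (Nat.floor_le h.le) hz

private lemma gauss_tail_eq (m : ℝ) (v : ℝ≥0) (hv : 0 < (v : ℝ)) (c : ℝ) :
    gaussianReal m v {y : ℝ | c ≤ |y - m|} =
      gaussianReal 0 1 {z : ℝ | c / Real.sqrt v ≤ |z|} := by
  set s := Real.sqrt (v : ℝ) with hs
  have hspos : 0 < s := Real.sqrt_pos.mpr hv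
  have hv1 : (⟨s ^ 2, sq_nonneg s⟩ : ℝ≥0) * 1 = v := by
    rw [mul_one]
    exact NNReal.coe_injective (show s ^ 2 = (v:ℝ) by rw [hs]; exact Real.sq_sqrt hv.le)
  have h1 : (gaussianReal 0 1).map (s * ·) = gaussianReal 0 v := by
    rw [gaussianReal_map_const_mul, mul_zero]; exact congrArg (gaussianReal 0) hv1
  have h2 : (gaussianReal 0 v).map (· + m) = gaussianReal m v := by
    rw [gaussianReal_map_add_const, zero_add]
  have hT : MeasurableSet {y : ℝ | c ≤ |y - m|} :=
    (isClosed_le continuous_const ((continuous_id.sub continuous_const).abs)).measurableSet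
  rw [← h2, ← h1, Measure.map_map (measurable_add_const m) (measurable_const_mul s),
    Measure.map_apply ((measurable_add_const m).comp (measurable_const_mul s)) hT]
  congr 1
  ext z
  simp only [Set.mem_preimage, Function.comp_apply, Set.mem_setOf_eq, add_sub_cancel_right,
    abs_mul, abs_of_pos hspos]
  rw [div_le_iff₀ hspos, mul_comm]

theorem group_lasso_suboptimal_rate
    (p G : ℕ) (gr : Fin p → Fin G) (hgr : Function.Surjective gr)
    (β0 : Fin p → ℝ) (σ : ℝ) (hσ : 0 < σ)
    (μ : ℕ → Measure (Fin p → ℝ))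
    (hμ : ∀ n, μ n =
      Measure.pi (fun i : Fin p => gaussianReal (β0 i) (Real.toNNReal (σ ^ 2 / n))))
    (lam : ℕ → ℝ) (hlam : ∀ n, 0 < lam n)
    (hlim1 : Tendsto (fun n => lam n / Real.sqrt n) atTop atTop)
    (hlim2 : Tendsto (fun n => lam n / n) atTop (nhds 0))
    (bnorm : Fin G → (Fin p → ℝ) → ℝ)
    (hbnorm : ∀ g x, bnorm g x =
      Real.sqrt (∑ i ∈ Finset.univ.filter (fun i => gr i = g), x i ^ 2))
    (glEst : ℕ → (Fin p → ℝ) → (Fin p → ℝ))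
    (hglEst : ∀ n x i, glEst n x i =
      if bnorm (gr i) x = 0 then 0
      else max (1 - lam n / ((n : ℝ) * bnorm (gr i) x)) 0 * x i)
    (hactive : ∀ g : Fin G, ∃ i, gr i = g ∧ β0 i ≠ 0)
    (C : Fin p → ℝ) (hC : ∀ i, C i = -(β0 i) / bnorm (gr i) β0) :
    ∀ ε > (0 : ℝ),
      Tendsto (fun n => μ n
          {x | Real.sqrt (∑ i, ((n : ℝ) / lam n * (glEst n x i - β0 i) - C i) ^ 2) > ε})
        atTop (nhds 0) := by
  intro ε hε
  classical
  -- positivity of group norms at β0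
  have hb0 : ∀ g : Fin G, 0 < bnorm g β0 := by
    intro g
    obtain ⟨i, hig, hi⟩ := hactive g
    rw [hbnorm]
    apply Real.sqrt_pos.mpr
    have hmem : i ∈ Finset.univ.filter (fun j => gr j = g) := by simp [hig]
    refine Finset.sum_pos' (fun j _ => sq_nonneg _) ⟨i, hmem, ?_⟩
    have : 0 < |β0 i| := abs_pos.mpr hi
    calc (0:ℝ) < |β0 i| ^ 2 := by positivity
    _ = β0 i ^ 2 := sq_abs _
  -- the perturbed group norm
  set A : Fin G → ℝ × (Fin p → ℝ) → ℝ := fun g q =>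
    Real.sqrt (∑ j ∈ Finset.univ.filter (fun j => gr j = g), (β0 j + q.1 * q.2 j) ^ 2)
    with hA
  have hAcont : ∀ g, Continuous (A g) := by
    intro g
    apply Real.continuous_sqrt.comp
    apply continuous_finset_sum
    intro j _
    have : Continuous fun q : ℝ × (Fin p → ℝ) => q.2 j :=
      (continuous_apply j).comp continuous_snd
    exact (continuous_const.add (continuous_fst.mul this)).pow 2
  have hA0 : ∀ g, A g ((0 : ℝ), fun _ => (0 : ℝ)) = bnorm g β0 := by
    intro g; rw [hbnorm]; simp [hA]
  -- the limiting expression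
  set q0 : ℝ × (Fin p → ℝ) := ((0 : ℝ), fun _ => (0 : ℝ)) with hq0
  set Φ : ℝ × (Fin p → ℝ) → ℝ := fun q =>
    Real.sqrt (∑ i, (q.2 i - (β0 i + q.1 * q.2 i) / A (gr i) q - C i) ^ 2) with hΦ
  have hΦcont : ContinuousAt Φ q0 := by
    apply Real.continuous_sqrt.continuousAt.comp
    apply tendsto_finset_sum
    intro i _
    have h1 : ContinuousAt (fun q : ℝ × (Fin p → ℝ) => q.2 i) q0 :=
      ((continuous_apply i).comp continuous_snd).continuousAt
    have h2 : ContinuousAt (fun q : ℝ × (Fin p → ℝ) => (β0 i + q.1 * q.2 i) / A (gr i) q) q0 := by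
      apply ContinuousAt.div
      · exact (continuous_const.add (continuous_fst.mul
          (show Continuous fun q : ℝ × (Fin p → ℝ) => q.2 i from
            (continuous_apply i).comp continuous_snd))).continuousAt
      · exact (hAcont (gr i)).continuousAt
      · rw [hA0]; exact (hb0 (gr i)).ne'
    exact (((h1.sub h2).sub continuousAt_const).pow 2)
  have hΦ0 : Φ q0 = 0 := by
    rw [hΦ]
    have hz : ∀ i : Fin p,
        (q0.2 i - (β0 i + q0.1 * q0.2 i) / A (gr i) q0 - C i) ^ 2 = 0 := by
      intro i
      rw [hC i, hA0 (gr i)]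
      have e1 : q0.1 = 0 := rfl
      have e2 : q0.2 i = 0 := rfl
      rw [e1, e2]
      ring
    simp only [hz, Finset.sum_const_zero, Real.sqrt_zero]
  -- the good neighborhood
  have hV : {q : ℝ × (Fin p → ℝ) | Φ q < ε ∧ ∀ g, q.1 < A g q} ∈ nhds q0 := by
    have hh1 : {q : ℝ × (Fin p → ℝ) | Φ q < ε} ∈ nhds q0 :=
      hΦcont.preimage_mem_nhds (t := Set.Iio ε) (by rw [hΦ0]; exact Iio_mem_nhds hε)
    have hh2 : (⋂ g : Fin G, {q : ℝ × (Fin p → ℝ) | q.1 < A g q}) ∈ nhds q0 := by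
      rw [Filter.iInter_mem]
      intro g
      refine (isOpen_lt continuous_fst (hAcont g)).mem_nhds ?_
      show q0.1 < A g q0
      have e1 : q0.1 = 0 := rfl
      rw [e1, hA0]
      exact hb0 g
    refine Filter.mem_of_superset (Filter.inter_mem hh1 hh2) ?_
    rintro q ⟨ha, hb⟩
    exact ⟨ha, fun g => Set.mem_iInter.mp hb g⟩
  obtain ⟨δ, hδ, hball⟩ := Metric.mem_nhds_iff.mp hV
  -- deterministic part
  have hdet : ∀ n : ℕ, 1 ≤ n → lam n / n < δ → ∀ x : Fin p → ℝ,
      (∀ i, |(n : ℝ) / lam n * (x i - β0 i)| < δ) →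
      Real.sqrt (∑ i, ((n : ℝ) / lam n * (glEst n x i - β0 i) - C i) ^ 2) < ε := by
    intro n hn hlt x hx
    have hn0 : (0 : ℝ) < n := by exact_mod_cast hn
    have hl0 := hlam n
    set t : ℝ := lam n / n with hts
    set u : Fin p → ℝ := fun i => (n : ℝ) / lam n * (x i - β0 i) with hu
    have ht : 0 < t := div_pos hl0 hn0
    have hmem : ((t, u) : ℝ × (Fin p → ℝ)) ∈ Metric.ball q0 δ := by
      rw [Metric.mem_ball, hq0, Prod.dist_eq]
      apply max_lt
      · rw [Real.dist_eq, sub_zero, abs_of_pos ht]; exact hlt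
      · rw [dist_pi_lt_iff hδ]
        intro i
        rw [Real.dist_eq, sub_zero]
        exact hx i
    obtain ⟨hΦlt, hAgt⟩ := hball hmem
    have hx' : ∀ j, β0 j + t * u j = x j := by
      intro j
      rw [hu, hts]
      field_simp
      ring
    have hAx : ∀ g, A g (t, u) = bnorm g x := by
      intro g
      rw [hbnorm]
      show Real.sqrt (∑ j ∈ Finset.univ.filter (fun j => gr j = g), (β0 j + t * u j) ^ 2) = _
      exact congrArg Real.sqrt (Finset.sum_congr rfl fun j _ => by rw [hx' j])
    have hsum : ∀ i : Fin p,
        (n : ℝ) / lam n * (glEst n x i - β0 i) - C i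
          = u i - (β0 i + t * u i) / A (gr i) (t, u) - C i := by
      intro i
      have ha : 0 < bnorm (gr i) x := by
        rw [← hAx]; exact lt_trans ht (hAgt (gr i))
      have hta : t < bnorm (gr i) x := by rw [← hAx]; exact hAgt (gr i)
      have hmax : max (1 - lam n / ((n : ℝ) * bnorm (gr i) x)) 0
          = 1 - t / bnorm (gr i) x := by
        rw [← div_div, ← hts]
        exact max_eq_left (by rw [sub_nonneg]; exact (div_le_one ha).mpr hta.le)
      rw [hglEst, if_neg ha.ne', hmax, hAx, hx' i, hu, hts]
      field_simp
      ring
    have hΦtu : Φ (t, u)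
        = Real.sqrt (∑ i, (u i - (β0 i + t * u i) / A (gr i) (t, u) - C i) ^ 2) := rfl
    have heq : Real.sqrt (∑ i, ((n : ℝ) / lam n * (glEst n x i - β0 i) - C i) ^ 2)
        = Φ (t, u) := by
      rw [hΦtu]
      exact congrArg Real.sqrt (Finset.sum_congr rfl fun i _ => by rw [hsum i])
    rw [heq]
    exact hΦlt
  -- inclusion into coordinate-wise tail events
  have hsub : ∀ n : ℕ, 1 ≤ n → lam n / n < δ →
      {x : Fin p → ℝ |
          Real.sqrt (∑ i, ((n : ℝ) / lam n * (glEst n x i - β0 i) - C i) ^ 2) > ε}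
        ⊆ ⋃ i : Fin p, {x : Fin p → ℝ | δ * (lam n / n) ≤ |x i - β0 i|} := by
    intro n h1 h2 x hx
    by_contra hcon
    simp only [Set.mem_iUnion, Set.mem_setOf_eq, not_exists, not_le] at hcon
    have hn0 : (0 : ℝ) < n := by exact_mod_cast h1
    have hl0 := hlam n
    have hcoord : ∀ i, |(n : ℝ) / lam n * (x i - β0 i)| < δ := by
      intro i
      rw [abs_mul, abs_of_pos (div_pos hn0 hl0)]
      calc (n : ℝ) / lam n * |x i - β0 i|
          < (n : ℝ) / lam n * (δ * (lam n / n)) := by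
            exact mul_lt_mul_of_pos_left (hcon i) (div_pos hn0 hl0)
        _ = δ := by field_simp
    exact lt_irrefl _ (lt_trans hx (hdet n h1 h2 x hcoord))
  -- measure of each coordinate tail event
  have hcoordmeas : ∀ n : ℕ, 1 ≤ n → ∀ i : Fin p,
      μ n {x : Fin p → ℝ | δ * (lam n / n) ≤ |x i - β0 i|}
        = gaussianReal 0 1
            {z : ℝ | (δ * (lam n / n)) / Real.sqrt (σ ^ 2 / n) ≤ |z|} := by
    intro n hn i
    have hn0 : (0 : ℝ) < n := by exact_mod_cast hn
    have hvpos : 0 < σ ^ 2 / (n : ℝ) := by positivity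
    have hvco : ((Real.toNNReal (σ ^ 2 / n) : ℝ≥0) : ℝ) = σ ^ 2 / n :=
      Real.coe_toNNReal _ hvpos.le
    set c : ℝ := δ * (lam n / n) with hc'
    have hT : MeasurableSet {y : ℝ | c ≤ |y - β0 i|} :=
      (isClosed_le continuous_const ((continuous_id.sub continuous_const).abs)).measurableSet
    have hcyl : {x : Fin p → ℝ | c ≤ |x i - β0 i|}
        = Set.pi Set.univ (fun j => if j = i then {y : ℝ | c ≤ |y - β0 i|} else Set.univ) := by
      ext x
      simp only [Set.mem_setOf_eq, Set.mem_univ_pi]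
      constructor
      · intro h j
        by_cases hj : j = i
        · subst hj; simp [h]
        · simp [hj]
      · intro h
        have := h i
        simpa using this
    rw [hμ n, hcyl, Measure.pi_pi]
    rw [Finset.prod_eq_single i (fun j _ hj => by simp [hj]) (by simp)]
    simp only [if_true, eq_self_iff_true]
    rw [gauss_tail_eq (β0 i) _ (by rw [hvco]; exact hvpos) c, hvco]
  -- the tail bound tends to 0
  have hctend : Tendsto
      (fun n : ℕ => (δ * (lam n / n)) / Real.sqrt (σ ^ 2 / n)) atTop atTop := by
    have heq : ∀ᶠ n : ℕ in atTop,
        δ / σ * (lam n / Real.sqrt n) = (δ * (lam n / n)) / Real.sqrt (σ ^ 2 / n) := by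
      filter_upwards [eventually_ge_atTop 1] with n hn
      have hn0 : (0 : ℝ) < n := by exact_mod_cast hn
      rw [Real.sqrt_div (sq_nonneg σ), Real.sqrt_sq hσ.le]
      have h2 : (n : ℝ) = Real.sqrt n * Real.sqrt n := (Real.mul_self_sqrt hn0.le).symm
      have hsn : (0 : ℝ) < Real.sqrt n := Real.sqrt_pos.mpr hn0
      set s := Real.sqrt (n : ℝ) with hs
      rw [h2]
      field_simp
    apply Tendsto.congr' heq
    exact hlim1.const_mul_atTop (by positivity)
  have htail : Tendsto
      (fun n : ℕ => ∑ _i : Fin p, gaussianReal 0 1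
          {z : ℝ | (δ * (lam n / n)) / Real.sqrt (σ ^ 2 / n) ≤ |z|}) atTop (nhds 0) := by
    have := tendsto_finset_sum (f := fun (_i : Fin p) (n : ℕ) => gaussianReal 0 1
        {z : ℝ | (δ * (lam n / n)) / Real.sqrt (σ ^ 2 / n) ≤ |z|})
      (Finset.univ) (fun i _ => std_tail_tendsto' hctend)
    simpa using this
  -- conclusion by squeezing
  have hev : ∀ᶠ n : ℕ in atTop,
      μ n {x | Real.sqrt (∑ i, ((n : ℝ) / lam n * (glEst n x i - β0 i) - C i) ^ 2) > ε}
        ≤ ∑ _i : Fin p, gaussianReal 0 1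
            {z : ℝ | (δ * (lam n / n)) / Real.sqrt (σ ^ 2 / n) ≤ |z|} := by
    have hev2 : ∀ᶠ n : ℕ in atTop, lam n / (n : ℝ) < δ := hlim2 (Iio_mem_nhds hδ)
    filter_upwards [eventually_ge_atTop 1, hev2] with n h1 h2
    calc μ n {x | Real.sqrt (∑ i, ((n : ℝ) / lam n * (glEst n x i - β0 i) - C i) ^ 2) > ε}
        ≤ μ n (⋃ i : Fin p, {x : Fin p → ℝ | δ * (lam n / n) ≤ |x i - β0 i|}) :=
          measure_mono (hsub n h1 h2)
      _ ≤ ∑ i : Fin p, μ n {x : Fin p → ℝ | δ * (lam n / n) ≤ |x i - β0 i|} :=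
          measure_iUnion_fintype_le _ _
      _ = ∑ _i : Fin p, gaussianReal 0 1
            {z : ℝ | (δ * (lam n / n)) / Real.sqrt (σ ^ 2 / n) ≤ |z|} :=
          Finset.sum_congr rfl fun i _ => hcoordmeas n h1 i
  refine tendsto_of_tendsto_of_tendsto_of_le_of_le' tendsto_const_nhds htail
    (Eventually.of_forall fun n => zero_le) hev
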